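/- The Rawlsian rule satisfies lower invariance: if agent i swaps two consecutively ranked objects a and b (with a ranked just above b in ⪰_i) to obtain ⪰'_i, then in the Rawlsian assignments for (⪰_i, ⪰_{−i}) and (⪰'_i, ⪰_{−i}), agent i's assignment probabilities coincide on every object that she ranks strictly below b under ⪰_i. -/
import Mathlib


open Finset

/-- An n×n matrix with nonnegative real entries whose rows and columns each sum to 1. -/
def Bistochastic {n : ℕ} (x : Fin n → Fin n → ℝ) : Prop :=
  (∀ i o, 0 ≤ x i o) ∧ (∀ i, ∑ o, x i o = 1) ∧ (∀ o, ∑ i, x i o = 1)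

/-- `tailProb rank x i k` = probability that agent `i` receives an object ranked `k`-th
or worse (ranks are 0-indexed: rank 0 = most preferred). -/
def tailProb {n : ℕ} (rank : Fin n → Fin n → Fin n) (x : Fin n → Fin n → ℝ)
    (i k : Fin n) : ℝ :=
  ∑ o ∈ Finset.univ.filter (fun o => k ≤ rank i o), x i o

/-- The values of `v` rearranged in non-increasing order. -/
noncomputable def sortedDesc {n : ℕ} (v : Fin n → ℝ) : Fin n → ℝ :=
  fun j => v (Tuple.sort (fun i => -v i) j)

/-- Block `t` of `Bvec rank x` is the non-increasing rearrangement of the tail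
probabilities at threshold `n-1-t`; so blocks run from the worst rank down. -/
noncomputable def Bvec {n : ℕ} (rank : Fin n → Fin n → Fin n) (x : Fin n → Fin n → ℝ) :
    Fin n → Fin n → ℝ :=
  fun t => sortedDesc (fun i => tailProb rank x i t.rev)

/-- Lexicographic strict order on doubly-indexed vectors (outer index first). -/
def BlockLexLt {α β : Type*} [LinearOrder α] [LinearOrder β] (u v : α → β → ℝ) : Prop :=
  ∃ t s, u t s < v t s ∧ ∀ t' s', (t' < t ∨ (t' = t ∧ s' < s)) → u t' s' = v t' s'

/-- `x` Rawlsian-dominates `y`. -/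
def RDom {n : ℕ} (rank : Fin n → Fin n → Fin n) (x y : Fin n → Fin n → ℝ) : Prop :=
  BlockLexLt (Bvec rank x) (Bvec rank y)

/-- A Rawlsian assignment: a bistochastic matrix not R-dominated by any other. -/
def Rawlsian {n : ℕ} (rank : Fin n → Fin n → Fin n) (x : Fin n → Fin n → ℝ) : Prop :=
  Bistochastic x ∧ ∀ y, Bistochastic y → ¬ RDom rank y x

lemma card_filter_lt {n k : ℕ} (hk : k ≤ n) :
    (Finset.univ.filter (fun j : Fin n => (j : ℕ) < k)).card = k := by
  have h : Finset.univ.filter (fun j : Fin n => (j : ℕ) < k)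
      = Finset.map (Fin.castLEEmb hk) Finset.univ := by
    ext j
    simp only [Finset.mem_filter, Finset.mem_univ, true_and, Finset.mem_map]
    constructor
    · intro h
      exact ⟨⟨(j : ℕ), h⟩, rfl⟩
    · rintro ⟨a, -, rfl⟩
      exact a.2
  rw [h, Finset.card_map, Finset.card_univ, Fintype.card_fin]

lemma sum_le_sum_filter_lt {n : ℕ} (g : Fin n → ℝ) (hg : Antitone g) (T : Finset (Fin n)) :
    ∑ j ∈ T, g j ≤ ∑ j ∈ Finset.univ.filter (fun j : Fin n => (j : ℕ) < T.card), g j := by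
  classical
  have hcard : (Finset.univ.filter (fun j : Fin n => (j : ℕ) < T.card)).card = T.card :=
    card_filter_lt (by simpa using T.card_le_univ)
  have hdd : (T \ Finset.univ.filter (fun j : Fin n => (j : ℕ) < T.card)).card
      = ((Finset.univ.filter (fun j : Fin n => (j : ℕ) < T.card)) \ T).card :=
    Finset.card_sdiff_comm hcard.symm
  have e := Finset.equivOfCardEq hdd
  have key : ∑ j ∈ T \ Finset.univ.filter (fun j : Fin n => (j : ℕ) < T.card), g j
      ≤ ∑ j ∈ (Finset.univ.filter (fun j : Fin n => (j : ℕ) < T.card)) \ T, g j := by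
    calc ∑ j ∈ T \ Finset.univ.filter (fun j : Fin n => (j : ℕ) < T.card), g j
        = ∑ j : (T \ Finset.univ.filter (fun j : Fin n => (j : ℕ) < T.card) : Finset (Fin n)),
          g j := by rw [Finset.sum_coe_sort]
      _ ≤ ∑ j : (T \ Finset.univ.filter (fun j : Fin n => (j : ℕ) < T.card) : Finset (Fin n)),
          g (e j) := by
          apply Finset.sum_le_sum
          intro j _
          apply hg
          have h1 : ((e j : Fin n) : ℕ) < T.card := by
            have h := (e j).2
            simp only [Finset.mem_sdiff, Finset.mem_filter, Finset.mem_univ, true_and] at h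
            exact h.1
          have h2 : ¬ ((j : Fin n) : ℕ) < T.card := by
            have h := j.2
            simp only [Finset.mem_sdiff, Finset.mem_filter, Finset.mem_univ, true_and] at h
            exact h.2
          exact Fin.le_def.mpr (by omega)
      _ = ∑ j : ((Finset.univ.filter (fun j : Fin n => (j : ℕ) < T.card)) \ T : Finset (Fin n)),
          g j := Equiv.sum_comp e (fun i => g i)
      _ = ∑ j ∈ (Finset.univ.filter (fun j : Fin n => (j : ℕ) < T.card)) \ T, g j := by
          rw [Finset.sum_coe_sort]
  have h1 := Finset.sum_inter_add_sum_sdiff T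
    (Finset.univ.filter (fun j : Fin n => (j : ℕ) < T.card)) g
  have h2 := Finset.sum_inter_add_sum_sdiff
    (Finset.univ.filter (fun j : Fin n => (j : ℕ) < T.card)) T g
  rw [Finset.inter_comm] at h2
  linarith

lemma sortedDesc_antitone {n : ℕ} (v : Fin n → ℝ) : Antitone (sortedDesc v) := by
  intro j j' h
  have h2 : -v (Tuple.sort (fun i => -v i) j) ≤ -v (Tuple.sort (fun i => -v i) j') :=
    Tuple.monotone_sort (fun i => -v i) h
  simp only [sortedDesc]
  linarith

lemma sum_sortedDesc_comp {n : ℕ} (v : Fin n → ℝ) (f : ℝ → ℝ) :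
    ∑ j, f (sortedDesc v j) = ∑ i, f (v i) :=
  Equiv.sum_comp (Tuple.sort (fun i => -v i)) (fun i => f (v i))

noncomputable def topSum {n : ℕ} (k : ℕ) (v : Fin n → ℝ) : ℝ :=
  ∑ j ∈ Finset.univ.filter (fun j : Fin n => (j : ℕ) < k), sortedDesc v j

lemma topSum_eq_sum_image {n : ℕ} (k : ℕ) (v : Fin n → ℝ) :
    topSum k v = ∑ i ∈ (Finset.univ.filter (fun j : Fin n => (j : ℕ) < k)).image
      (Tuple.sort (fun i => -v i)), v i := by
  rw [Finset.sum_image (fun a _ b _ h => (Tuple.sort (fun i => -v i)).injective h)]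
  rfl

lemma sum_le_topSum {n : ℕ} (v : Fin n → ℝ) (S : Finset (Fin n)) :
    ∑ i ∈ S, v i ≤ topSum S.card v := by
  classical
  have h1 : ∑ i ∈ S, v i = ∑ j ∈ S.image (Tuple.sort (fun i => -v i)).symm, sortedDesc v j := by
    rw [Finset.sum_image (fun a _ b _ h => (Tuple.sort (fun i => -v i)).symm.injective h)]
    exact Finset.sum_congr rfl fun i _ => by simp [sortedDesc]
  have h2 : (S.image (Tuple.sort (fun i => -v i)).symm).card = S.card :=
    Finset.card_image_of_injective _ (Tuple.sort (fun i => -v i)).symm.injective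
  rw [h1]
  have h3 := sum_le_sum_filter_lt (sortedDesc v) (sortedDesc_antitone v)
    (S.image (Tuple.sort (fun i => -v i)).symm)
  rw [h2] at h3
  exact h3

lemma topSum_avg_le {n : ℕ} (u u' : Fin n → ℝ) (k : ℕ) (hk : k ≤ n) :
    topSum k (fun i => (u i + u' i) / 2) ≤ (topSum k u + topSum k u') / 2 := by
  classical
  set w := fun i => (u i + u' i) / 2 with hw
  set S := (Finset.univ.filter (fun j : Fin n => (j : ℕ) < k)).image
      (Tuple.sort (fun i => -w i)) with hS
  have hcard : S.card = k := by
    rw [hS, Finset.card_image_of_injective _ (Tuple.sort (fun i => -w i)).injective,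
      card_filter_lt hk]
  have h0 : topSum k w = ∑ i ∈ S, w i := topSum_eq_sum_image k w
  have h1 : ∑ i ∈ S, u i ≤ topSum k u := by
    have := sum_le_topSum u S; rwa [hcard] at this
  have h2 : ∑ i ∈ S, u' i ≤ topSum k u' := by
    have := sum_le_topSum u' S; rwa [hcard] at this
  have h3 : ∑ i ∈ S, w i = (∑ i ∈ S, u i + ∑ i ∈ S, u' i) / 2 := by
    rw [← Finset.sum_add_distrib, ← Finset.sum_div]
  rw [h0, h3]
  linarith

lemma topSum_succ {n : ℕ} (v : Fin n → ℝ) (s : Fin n) :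
    topSum ((s : ℕ) + 1) v = topSum (s : ℕ) v + sortedDesc v s := by
  have h : Finset.univ.filter (fun j : Fin n => (j : ℕ) < (s : ℕ) + 1)
      = insert s (Finset.univ.filter (fun j : Fin n => (j : ℕ) < (s : ℕ))) := by
    ext j
    simp only [Finset.mem_filter, Finset.mem_univ, true_and, Finset.mem_insert, Fin.ext_iff]
    omega
  rw [topSum, h, Finset.sum_insert (by simp)]
  rw [topSum]; ring

lemma exists_first_diff {n : ℕ} (A B : Fin n → Fin n → ℝ) (K : ℕ)
    (h : ¬ ∀ t s : Fin n, K < (t.rev : ℕ) → A t s = B t s) :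
    ∃ t s : Fin n, K < (t.rev : ℕ) ∧ A t s ≠ B t s ∧
      ∀ t' s', (t' < t ∨ (t' = t ∧ s' < s)) → A t' s' = B t' s' := by
  classical
  push_neg at h
  obtain ⟨t1, s1, ht1, hne1⟩ := h
  have hmin : ∀ (S : Finset (Fin n)), S.Nonempty → ∃ t0 ∈ S, ∀ t' ∈ S, t0 ≤ t' :=
    fun S hS => ⟨S.min' hS, Finset.min'_mem _ _, fun t' ht' => Finset.min'_le _ _ ht'⟩
  obtain ⟨t0, ht0mem, ht0min⟩ := hmin
    (Finset.univ.filter (fun t : Fin n => K < (t.rev : ℕ) ∧ ∃ s, A t s ≠ B t s))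
    ⟨t1, Finset.mem_filter.mpr ⟨Finset.mem_univ _, ht1, s1, hne1⟩⟩
  simp only [Finset.mem_filter, Finset.mem_univ, true_and] at ht0mem
  obtain ⟨hKt0, s2, hs2⟩ := ht0mem
  obtain ⟨s0, hs0mem, hs0min⟩ := hmin
    (Finset.univ.filter (fun s : Fin n => A t0 s ≠ B t0 s))
    ⟨s2, Finset.mem_filter.mpr ⟨Finset.mem_univ _, hs2⟩⟩
  simp only [Finset.mem_filter, Finset.mem_univ, true_and] at hs0mem
  refine ⟨t0, s0, hKt0, hs0mem, ?_⟩
  rintro t' s' (hlt | ⟨rfl, hlt⟩)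
  · by_contra hne
    have hK' : K < (t'.rev : ℕ) := by
      have h1 : t0.rev < t'.rev := Fin.rev_lt_rev.mpr hlt
      have h2 := Fin.lt_def.mp h1
      omega
    have hmem := ht0min t' (Finset.mem_filter.mpr ⟨Finset.mem_univ _, hK', s', hne⟩)
    exact absurd hmem (not_le.mpr hlt)
  · by_contra hne
    have hmem := hs0min s' (Finset.mem_filter.mpr ⟨Finset.mem_univ _, hne⟩)
    exact absurd hmem (not_le.mpr hlt)

/-- Lower invariance of the Rawlsian rule: if agent `i0` swaps two consecutively ranked
objects `a` (just above) and `b`, her Rawlsian assignment probabilities are unchanged on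
every object she ranks strictly below `b`. -/
theorem rawlsian_lower_invariant {n : ℕ} (rank rank' : Fin n → Fin n → Fin n)
    (hrank : ∀ i, Function.Bijective (rank i))
    (hrank' : ∀ i, Function.Bijective (rank' i))
    (i0 : Fin n) (a b : Fin n)
    (hcons : (rank i0 b : ℕ) = (rank i0 a : ℕ) + 1)
    (hswapa : rank' i0 a = rank i0 b) (hswapb : rank' i0 b = rank i0 a)
    (hother : ∀ o, o ≠ a → o ≠ b → rank' i0 o = rank i0 o)
    (hagents : ∀ j, j ≠ i0 → rank' j = rank j)
    (x y : Fin n → Fin n → ℝ)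
    (hx : Rawlsian rank x) (hy : Rawlsian rank' y) :
    ∀ o, rank i0 b < rank i0 o → x i0 o = y i0 o := by
  classical
  set K : ℕ := (rank i0 b : ℕ) with hK
  -- the filter sets defining tail probabilities agree for thresholds above K
  have hset : ∀ (k : Fin n), K < (k : ℕ) → ∀ i,
      (Finset.univ.filter fun o => k ≤ rank' i o)
        = (Finset.univ.filter fun o => k ≤ rank i o) := by
    intro k hk i
    by_cases hi : i = i0
    · subst hi
      ext o
      simp only [Finset.mem_filter, Finset.mem_univ, true_and]
      by_cases hoa : o = a
      · subst hoa
        rw [hswapa]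
        constructor
        · intro h; exact absurd (Fin.le_def.mp h) (by omega)
        · intro h; exact absurd (Fin.le_def.mp h) (by omega)
      · by_cases hob : o = b
        · subst hob
          rw [hswapb]
          constructor
          · intro h; exact absurd (Fin.le_def.mp h) (by omega)
          · intro h; exact absurd (Fin.le_def.mp h) (by omega)
        · rw [hother o hoa hob]
    · rw [hagents i hi]
  have htail : ∀ (z : Fin n → Fin n → ℝ) (i : Fin n) (k : Fin n), K < (k : ℕ) →
      tailProb rank' z i k = tailProb rank z i k := by
    intro z i k hk
    unfold tailProb
    rw [hset k hk i]
  have hBvec : ∀ (z : Fin n → Fin n → ℝ) (t : Fin n), K < (t.rev : ℕ) →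
      Bvec rank' z t = Bvec rank z t := by
    intro z t ht
    unfold Bvec
    have h : (fun i => tailProb rank' z i t.rev) = (fun i => tailProb rank z i t.rev) :=
      funext fun i => htail z i t.rev ht
    rw [h]
  -- Claim B : the prefixes of the optimal vectors agree
  have hB : ∀ (t s : Fin n), K < (t.rev : ℕ) → Bvec rank x t s = Bvec rank' y t s := by
    by_contra hcon
    obtain ⟨t, s, hKt, hne, hprev⟩ := exists_first_diff (Bvec rank x) (Bvec rank' y) K hcon
    have hprev' : ∀ t' s', (t' < t ∨ (t' = t ∧ s' < s)) → K < (t'.rev : ℕ) := by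
      rintro t' s' h'
      have ht't : t' ≤ t := by
        rcases h' with h' | ⟨h'', -⟩
        · exact le_of_lt h'
        · exact le_of_eq h''
      have := Fin.le_def.mp (Fin.rev_le_rev.mpr ht't)
      omega
    rcases lt_or_gt_of_ne hne with h1 | h1
    · refine hy.2 x hx.1 ⟨t, s, ?_, ?_⟩
      · rw [hBvec x t hKt]; exact h1
      · intro t' s' h'
        rw [hBvec x t' (hprev' t' s' h')]
        exact hprev t' s' h'
    · refine hx.2 y hy.1 ⟨t, s, ?_, ?_⟩
      · rw [← hBvec y t hKt]; exact h1
      · intro t' s' h'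
        rw [← hBvec y t' (hprev' t' s' h')]
        exact (hprev t' s' h').symm
  -- the midpoint matrix
  set m : Fin n → Fin n → ℝ := fun i o => (x i o + y i o) / 2 with hm
  have hmbi : Bistochastic m := by
    refine ⟨fun i o => ?_, fun i => ?_, fun o => ?_⟩
    · have h1 := hx.1.1 i o
      have h2 := hy.1.1 i o
      show (0:ℝ) ≤ (x i o + y i o) / 2
      linarith
    · rw [hm]
      simp only
      rw [← Finset.sum_div, Finset.sum_add_distrib, hx.1.2.1 i, hy.1.2.1 i]
      norm_num
    · rw [hm]
      simp only
      rw [← Finset.sum_div, Finset.sum_add_distrib, hx.1.2.2 o, hy.1.2.2 o]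
      norm_num
  have htailm : ∀ (i k : Fin n),
      tailProb rank m i k = (tailProb rank x i k + tailProb rank y i k) / 2 := by
    intro i k
    unfold tailProb
    rw [← Finset.sum_add_distrib, ← Finset.sum_div]
  -- Claim C : the prefix of the midpoint agrees with that of x
  have hC : ∀ (t s : Fin n), K < (t.rev : ℕ) → Bvec rank m t s = Bvec rank x t s := by
    by_contra hcon
    obtain ⟨t, s, hKt, hne, hprev⟩ := exists_first_diff (Bvec rank m) (Bvec rank x) K hcon
    have hsortuu' : ∀ s' : Fin n,
        sortedDesc (fun i => tailProb rank x i t.rev) s'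
          = sortedDesc (fun i => tailProb rank y i t.rev) s' := by
      intro s'
      have h1 := hB t s' hKt
      have h2 : (fun i => tailProb rank' y i t.rev) = (fun i => tailProb rank y i t.rev) :=
        funext fun i => htail y i t.rev hKt
      unfold Bvec at h1
      rw [h2] at h1
      exact h1
    have hwm : (fun i => tailProb rank m i t.rev)
        = fun i => ((fun i => tailProb rank x i t.rev) i
            + (fun i => tailProb rank y i t.rev) i) / 2 :=
      funext fun i => htailm i t.rev
    have htopuu' : ∀ k : ℕ, topSum k (fun i => tailProb rank x i t.rev)
        = topSum k (fun i => tailProb rank y i t.rev) :=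
      fun k => Finset.sum_congr rfl fun j _ => hsortuu' j
    have hle : Bvec rank m t s ≤ Bvec rank x t s := by
      have e1 : topSum ((s : ℕ) + 1) (fun i => tailProb rank m i t.rev)
          ≤ (topSum ((s : ℕ) + 1) (fun i => tailProb rank x i t.rev)
            + topSum ((s : ℕ) + 1) (fun i => tailProb rank y i t.rev)) / 2 := by
        rw [hwm]
        exact topSum_avg_le _ _ _ s.isLt
      rw [← htopuu' ((s : ℕ) + 1)] at e1
      have e2 : topSum (s : ℕ) (fun i => tailProb rank m i t.rev)
          = topSum (s : ℕ) (fun i => tailProb rank x i t.rev) := by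
        refine Finset.sum_congr rfl fun j hj => ?_
        have hjs : j < s := by
          rw [Finset.mem_filter] at hj
          exact Fin.lt_def.mpr hj.2
        exact hprev t j (Or.inr ⟨rfl, hjs⟩)
      have e3 := topSum_succ (fun i => tailProb rank m i t.rev) s
      have e4 := topSum_succ (fun i => tailProb rank x i t.rev) s
      show sortedDesc (fun i => tailProb rank m i t.rev) s
        ≤ sortedDesc (fun i => tailProb rank x i t.rev) s
      linarith
    exact hx.2 m hmbi ⟨t, s, lt_of_le_of_ne hle hne, hprev⟩
  -- pointwise equality of tail probabilities above K
  have hpt : ∀ (k : Fin n), K < (k : ℕ) → ∀ i,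
      tailProb rank x i k = tailProb rank y i k := by
    intro k hk
    have hKt : K < ((k.rev).rev : ℕ) := by rw [Fin.rev_rev]; exact hk
    have hsortwu : ∀ s : Fin n,
        sortedDesc (fun i => tailProb rank m i k) s
          = sortedDesc (fun i => tailProb rank x i k) s := by
      intro s
      have := hC k.rev s hKt
      unfold Bvec at this
      rwa [Fin.rev_rev] at this
    have hsortuu' : ∀ s : Fin n,
        sortedDesc (fun i => tailProb rank x i k) s
          = sortedDesc (fun i => tailProb rank y i k) s := by
      intro s
      have h1 := hB k.rev s hKt
      have h2 : (fun i => tailProb rank' y i (k.rev).rev)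
          = (fun i => tailProb rank y i (k.rev).rev) :=
        funext fun i => htail y i (k.rev).rev hKt
      unfold Bvec at h1
      rw [h2] at h1
      rwa [Fin.rev_rev] at h1
    set u : Fin n → ℝ := fun i => tailProb rank x i k with hu
    set u' : Fin n → ℝ := fun i => tailProb rank y i k with hu'
    have q1 : ∑ i, (u i) ^ 2 = ∑ i, (u' i) ^ 2 := by
      rw [← sum_sortedDesc_comp u (fun r => r ^ 2), ← sum_sortedDesc_comp u' (fun r => r ^ 2)]
      exact Finset.sum_congr rfl fun j _ => by rw [hsortuu' j]
    have q2 : ∑ i, ((u i + u' i) / 2) ^ 2 = ∑ i, (u i) ^ 2 := by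
      have hwm : (fun i => tailProb rank m i k) = fun i => (u i + u' i) / 2 :=
        funext fun i => htailm i k
      calc ∑ i, ((u i + u' i) / 2) ^ 2
          = ∑ j, (sortedDesc (fun i => (u i + u' i) / 2) j) ^ 2 :=
            (sum_sortedDesc_comp _ (fun r => r ^ 2)).symm
        _ = ∑ j, (sortedDesc u j) ^ 2 := by
            refine Finset.sum_congr rfl fun j _ => ?_
            rw [← hwm]
            rw [hsortwu j]
        _ = ∑ i, (u i) ^ 2 := sum_sortedDesc_comp u (fun r => r ^ 2)
    have q4 : ∑ i, (u i - u' i) ^ 2 = 0 := by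
      have hexp : ∑ i, (u i - u' i) ^ 2
          = 2 * ∑ i, (u i) ^ 2 + 2 * ∑ i, (u' i) ^ 2 - 4 * ∑ i, ((u i + u' i) / 2) ^ 2 := by
        rw [Finset.mul_sum, Finset.mul_sum, Finset.mul_sum, ← Finset.sum_add_distrib,
          ← Finset.sum_sub_distrib]
        exact Finset.sum_congr rfl fun i _ => by ring
      rw [hexp, q1, q2, ← q1]
      ring
    intro i
    have h5 := (Finset.sum_eq_zero_iff_of_nonneg (fun i _ => sq_nonneg (u i - u' i))).mp
      q4 i (Finset.mem_univ i)
    have h6 : u i - u' i = 0 := by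
      have := sq_eq_zero_iff.mp h5
      exact this
    have : u i = u' i := by linarith
    exact this
  -- conclude
  intro o ho
  have hk : K < ((rank i0 o : Fin n) : ℕ) := Fin.lt_def.mp ho
  have hinj := (hrank i0).1
  have hins : Finset.univ.filter (fun o' => rank i0 o ≤ rank i0 o')
      = insert o (Finset.univ.filter (fun o' => rank i0 o < rank i0 o')) := by
    ext o'
    simp only [Finset.mem_filter, Finset.mem_univ, true_and, Finset.mem_insert]
    constructor
    · intro h
      rcases eq_or_lt_of_le h with heq | hlt
      · left; exact hinj heq.symm
      · right; exact hlt
    · rintro (rfl | h)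
      · exact le_refl _
      · exact le_of_lt h
  have hnotmem : o ∉ Finset.univ.filter (fun o' => rank i0 o < rank i0 o') := by
    simp
  have hxsplit : tailProb rank x i0 (rank i0 o)
      = x i0 o + ∑ o' ∈ Finset.univ.filter (fun o' => rank i0 o < rank i0 o'), x i0 o' := by
    unfold tailProb
    rw [hins, Finset.sum_insert hnotmem]
  have hysplit : tailProb rank y i0 (rank i0 o)
      = y i0 o + ∑ o' ∈ Finset.univ.filter (fun o' => rank i0 o < rank i0 o'), y i0 o' := by
    unfold tailProb
    rw [hins, Finset.sum_insert hnotmem]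
  have hstrict : ∑ o' ∈ Finset.univ.filter (fun o' => rank i0 o < rank i0 o'), x i0 o'
      = ∑ o' ∈ Finset.univ.filter (fun o' => rank i0 o < rank i0 o'), y i0 o' := by
    by_cases hsucc : ((rank i0 o : ℕ) + 1) < n
    · have hf : Finset.univ.filter (fun o' => rank i0 o < rank i0 o')
          = Finset.univ.filter
              (fun o' => (⟨(rank i0 o : ℕ) + 1, hsucc⟩ : Fin n) ≤ rank i0 o') := by
        ext o'
        simp only [Finset.mem_filter, Finset.mem_univ, true_and, Fin.lt_def, Fin.le_def]
        constructor
        · intro h; omega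
        · intro h; omega
      have := hpt ⟨(rank i0 o : ℕ) + 1, hsucc⟩ (by simp; omega) i0
      unfold tailProb at this
      rw [hf]
      exact this
    · have hf : Finset.univ.filter (fun o' => rank i0 o < rank i0 o') = ∅ := by
        rw [Finset.filter_eq_empty_iff]
        intro o' _
        rw [Fin.lt_def]
        have := (rank i0 o').isLt
        omega
      rw [hf]
      simp
  have hmain := hpt (rank i0 o) hk i0
  rw [hxsplit, hysplit] at hmain
  linarith
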